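/- Let p be the mesh pattern (12, {(0,0),(0,1),(0,2),(1,0),(1,2),(2,0),(2,1)}). A permutation π of length n ≥ 2 contains p if and only if π(1) = 1 and the permutation of length n−1 that is order-isomorphic to π(2)π(3)⋯π(n) has a strong fixed point. Consequently, the number of permutations of length n avoiding p equals n! − (n−1)! + g_{n−1}, where g_m denotes the number of permutations of length m with no strong fixed point. -/

import Mathlib

/-- 1-based position boundaries of an occurrence: `posOf x 0 = 0`,
`posOf x i = x_i` (1-based) for `1 ≤ i ≤ k`, and `posOf x i = n+1` for `i > k`. -/
def posOf {k n : ℕ} (x : Fin k → Fin n) (i : ℕ) : ℕ :=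
  if h : 1 ≤ i ∧ i ≤ k then (x ⟨i - 1, by omega⟩ : ℕ) + 1
  else if i = 0 then 0 else n + 1

/-- 1-based value boundaries of an occurrence: `valOf τ x π 0 = 0`,
`valOf τ x π j = y_j`, the `j`-th smallest of the values `π(x_1),…,π(x_k)`
(which equals `π(x_{τ⁻¹(j)})` for an occurrence of the classical pattern `τ`),
and `n+1` for `j > k`. -/
def valOf {k n : ℕ} (τ : Equiv.Perm (Fin k)) (x : Fin k → Fin n)
    (π : Equiv.Perm (Fin n)) (j : ℕ) : ℕ :=
  if h : 1 ≤ j ∧ j ≤ k then (π (x (τ.symm ⟨j - 1, by omega⟩)) : ℕ) + 1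
  else if j = 0 then 0 else n + 1

/-- `π` (a permutation of length `n`, 0-indexed via `Fin n`) contains the mesh
pattern `(τ, R)`, where boxes in `R` are given with 0-based coordinates in `[0,k]²`.
All positions/values are converted to 1-based via `+1`. -/
def MeshOccursIn {k n : ℕ} (τ : Equiv.Perm (Fin k)) (R : Set (ℕ × ℕ))
    (π : Equiv.Perm (Fin n)) : Prop :=
  ∃ x : Fin k → Fin n, StrictMono x ∧
    (∀ a b : Fin k, π (x a) < π (x b) ↔ τ a < τ b) ∧
    ∀ r ∈ R, ∀ z : Fin n,
      ¬ (posOf x r.1 < (z : ℕ) + 1 ∧ (z : ℕ) + 1 < posOf x (r.1 + 1) ∧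
         valOf τ x π r.2 < (π z : ℕ) + 1 ∧ (π z : ℕ) + 1 < valOf τ x π (r.2 + 1))

/-- `π` avoids the mesh pattern `(τ, R)`. -/
def MeshAvoids {k n : ℕ} (τ : Equiv.Perm (Fin k)) (R : Set (ℕ × ℕ))
    (π : Equiv.Perm (Fin n)) : Prop := ¬ MeshOccursIn τ R π

/-- `π` has a strong fixed point: an index `i` with `π(i) = i`, `π(j) < i`
for all `j < i` and `π(j) > i` for all `j > i` (0-indexed). -/
def HasStrongFixedPoint {n : ℕ} (π : Equiv.Perm (Fin n)) : Prop :=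
  ∃ i : Fin n, π i = i ∧ (∀ j : Fin n, j < i → π j < i) ∧ ∀ j : Fin n, i < j → i < π j

section Aux

open Equiv

private def R12 : Set (ℕ × ℕ) := {(0,0),(0,1),(0,2),(1,0),(1,2),(2,0),(2,1)}

variable {n m : ℕ}

private lemma posOf0 (x : Fin 2 → Fin n) : posOf x 0 = 0 := by simp [posOf]
private lemma posOf1 (x : Fin 2 → Fin n) : posOf x 1 = (x 0 : ℕ) + 1 := by simp [posOf]
private lemma posOf2 (x : Fin 2 → Fin n) : posOf x 2 = (x 1 : ℕ) + 1 := by simp [posOf]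
private lemma posOf3 (x : Fin 2 → Fin n) : posOf x 3 = n + 1 := by simp [posOf]
private lemma valOf0 (x : Fin 2 → Fin n) (π : Perm (Fin n)) : valOf 1 x π 0 = 0 := by
  simp [valOf]
private lemma valOf1 (x : Fin 2 → Fin n) (π : Perm (Fin n)) :
    valOf 1 x π 1 = (π (x 0) : ℕ) + 1 := by simp [valOf]; rfl
private lemma valOf2 (x : Fin 2 → Fin n) (π : Perm (Fin n)) :
    valOf 1 x π 2 = (π (x 1) : ℕ) + 1 := by simp [valOf]; rfl
private lemma valOf3 (x : Fin 2 → Fin n) (π : Perm (Fin n)) : valOf 1 x π 3 = n + 1 := by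
  simp [valOf]

private lemma perm_eq_of_pattern (σ σ' : Equiv.Perm (Fin m))
    (h : ∀ a b, σ a < σ b ↔ σ' a < σ' b) : σ = σ' := by
  have hmono : StrictMono ⇑(σ.symm.trans σ') := by
    intro u v huv
    have h2 : σ (σ.symm u) < σ (σ.symm v) := by simpa using huv
    exact (h _ _).mp h2
  have hkey : Set.range ⇑(σ.symm.trans σ') = Set.range (id : Fin m → Fin m) := by
    simp [Set.range_id, Equiv.surjective _ |>.range_eq]
  have hid : ⇑(σ.symm.trans σ') = id :=
    (@StrictMono.range_inj (Fin m) (Fin m) _ _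
      (inferInstance : WellFoundedLT (Fin m)) _ _ hmono strictMono_id).mp hkey
  apply Equiv.ext; intro a
  have := congrFun hid (σ a)
  simpa using this.symm

private lemma fixed_of_sandwich (π : Equiv.Perm (Fin n)) (t : Fin n)
    (h1 : ∀ z : Fin n, (z : ℕ) < t → (π z : ℕ) < π t)
    (h2 : ∀ z : Fin n, (t : ℕ) < z → (π t : ℕ) < π z) : (π t : ℕ) = t := by
  have hcard : (Finset.Iio t).card = (Finset.Iio (π t)).card := by
    apply Finset.card_bij' (fun z _ => π z) (fun v _ => π.symm v)
    · intro a ha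
      simp only [Finset.mem_Iio] at *
      exact Fin.lt_def.mpr (h1 a (Fin.lt_def.mp ha))
    · intro v hv
      simp only [Finset.mem_Iio] at *
      rcases lt_trichotomy (π.symm v) t with h | h | h
      · exact h
      · rw [← h] at hv; simp at hv
      · exfalso
        have := h2 (π.symm v) (Fin.lt_def.mp h)
        simp at this
        exact absurd hv (not_lt.mpr (le_of_lt (Fin.lt_def.mpr this)))
    · intro a _; simp
    · intro v _; simp
  simpa [Fin.card_Iio] using hcard.symm

/-- canonical characterization of an occurrence -/
private def Canon (π : Perm (Fin (m + 2))) : Prop :=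
  ∃ t : Fin (m + 2), 0 < (t : ℕ) ∧ π 0 = 0 ∧
    (∀ z : Fin (m + 2), (z : ℕ) < t → (π z : ℕ) < π t) ∧
    (∀ z : Fin (m + 2), (t : ℕ) < z → (π t : ℕ) < π z)

private lemma occ_iff_canon (π : Perm (Fin (m + 2))) :
    MeshOccursIn (1 : Perm (Fin 2)) R12 π ↔ Canon π := by
  constructor
  · rintro ⟨x, hmono, hiso, hbox⟩
    have hx : (x 0 : ℕ) < x 1 := hmono (by decide)
    have hv : (π (x 0) : ℕ) < π (x 1) := (hiso 0 1).mpr (by decide)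
    have hinj : ∀ z w : Fin (m + 2), (π z : ℕ) = π w → z = w := by
      intro z w h
      exact π.injective (Fin.ext h)
    have b00 := fun z => hbox (0,0) (by simp [R12]) z
    have b01 := fun z => hbox (0,1) (by simp [R12]) z
    have b02 := fun z => hbox (0,2) (by simp [R12]) z
    have b10 := fun z => hbox (1,0) (by simp [R12]) z
    have b12 := fun z => hbox (1,2) (by simp [R12]) z
    have b20 := fun z => hbox (2,0) (by simp [R12]) z
    have b21 := fun z => hbox (2,1) (by simp [R12]) z
    simp only [Nat.reduceAdd, posOf0, posOf1, posOf2, posOf3, valOf0, valOf1, valOf2, valOf3] at b00 b01 b02 b10 b12 b20 b21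
    -- x 0 = 0
    have hx0 : (x 0 : ℕ) = 0 := by
      by_contra h
      set z : Fin (m + 2) := ⟨0, by omega⟩ with hz
      have hzx0 : (z : ℕ) < x 0 := by show (0 : ℕ) < x 0; omega
      have hne0 : (π z : ℕ) ≠ π (x 0) := by
        intro he; have := hinj _ _ he; rw [this] at hzx0; omega
      have hne1 : (π z : ℕ) ≠ π (x 1) := by
        intro he; have := hinj _ _ he; rw [this] at hzx0; omega
      rcases Nat.lt_trichotomy (π z : ℕ) (π (x 0)) with h1 | h1 | h1
      · exact b00 z (by omega)
      · exact hne0 h1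
      rcases Nat.lt_trichotomy (π z : ℕ) (π (x 1)) with h2 | h2 | h2
      · exact b01 z (by omega)
      · exact hne1 h2
      · have := (π z).isLt; exact b02 z (by omega)
    -- minimality of π (x 0)
    have hmin : ∀ z : Fin (m + 2), z ≠ x 0 → (π (x 0) : ℕ) < π z := by
      intro z hz
      have hzpos : 0 < (z : ℕ) := by
        rcases Nat.eq_zero_or_pos (z : ℕ) with h | h
        · exact absurd (Fin.ext (by omega) : z = x 0) hz
        · exact h
      have hne : (π z : ℕ) ≠ π (x 0) := fun he => hz (hinj _ _ he)
      rcases Nat.lt_trichotomy (z : ℕ) (x 1) with h | h | h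
      · -- x 0 < z < x 1
        have := b10 z
        omega
      · have : z = x 1 := Fin.ext h
        rw [this]; exact hv
      · have := b20 z
        omega
    have hπx0 : (π (x 0) : ℕ) = 0 := by
      by_contra h
      have h0 : π (π.symm ⟨0, by omega⟩) = ⟨0, by omega⟩ := π.apply_symm_apply _
      have hne : π.symm ⟨0, by omega⟩ ≠ x 0 := by
        intro he; rw [he] at h0; rw [h0] at h; simp at h
      have := hmin _ hne
      rw [h0] at this; simp at this
    refine ⟨x 1, by omega, ?_, ?_, ?_⟩
    · have : (0 : Fin (m + 2)) = x 0 := by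
        apply Fin.ext; simp only [Fin.val_zero]; omega
      rw [this]; exact Fin.ext (by omega)
    · intro z hz
      rcases eq_or_ne (z : ℕ) ((x 0 : Fin (m+2)) : ℕ) with h | h
      · have : z = x 0 := Fin.ext h
        rw [this]; exact hv
      · have hz0 : (x 0 : ℕ) < z := by omega
        have hne : (π z : ℕ) ≠ π (x 1) := by
          intro he; have := hinj _ _ he; rw [this] at hz; omega
        have := b12 z
        have := (π z).isLt
        omega
    · intro z hz
      have hne1 : (π z : ℕ) ≠ π (x 1) := by
        intro he; have := hinj _ _ he; rw [this] at hz; omega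
      have hne0 : (π z : ℕ) ≠ π (x 0) := by
        intro he; have := hinj _ _ he; rw [this] at hz; omega
      have h20 := b20 z
      have h21 := b21 z
      omega
  · rintro ⟨t, ht0, hπ0, h3, h4⟩
    have hπ0v : (π 0 : ℕ) = 0 := by rw [hπ0]; rfl
    refine ⟨![0, t], ?_, ?_, ?_⟩
    · intro a b hab
      fin_cases a <;> fin_cases b <;>
        first
          | exact absurd hab (by decide)
          | (simp only [Matrix.cons_val_zero, Matrix.cons_val_one, Matrix.head_cons]
             exact Fin.lt_def.mpr (by simpa using ht0))
    · have h0t : (π 0 : ℕ) < π t := by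
        have : (π t : ℕ) ≠ 0 := by
          intro he
          have : π t = π 0 := Fin.ext (by rw [hπ0v]; exact he)
          have := π.injective this
          rw [this] at ht0; simp at ht0
        omega
      intro a b
      fin_cases a <;> fin_cases b <;>
        simp only [Fin.mk_zero, Fin.mk_one, Matrix.cons_val_zero, Matrix.cons_val_one,
          Matrix.head_cons, Equiv.Perm.coe_one, id_eq]
      · exact iff_of_false (lt_irrefl _) (lt_irrefl _)
      · exact iff_of_true (Fin.lt_def.mpr h0t) (by decide)
      · exact iff_of_false (fun hlt => absurd (Fin.lt_def.mp hlt) (by omega))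
          (by decide)
      · exact iff_of_false (lt_irrefl _) (lt_irrefl _)
    · intro r hr z
      have hx0 : ((![0, t] : Fin 2 → Fin (m+2)) 0 : ℕ) = 0 := by simp
      have hx1 : ((![0, t] : Fin 2 → Fin (m+2)) 1 : ℕ) = t := by simp
      have hπx0 : (π ((![0, t] : Fin 2 → Fin (m+2)) 0) : ℕ) = 0 := by simpa using hπ0v
      have hπx1 : (π ((![0, t] : Fin 2 → Fin (m+2)) 1) : ℕ) = π t := by simp
      simp only [R12, Set.mem_insert_iff, Set.mem_singleton_iff] at hr
      have hzlt := z.isLt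
      rcases hr with rfl | rfl | rfl | rfl | rfl | rfl | rfl <;>
        simp only [Nat.reduceAdd, posOf0, posOf1, posOf2, posOf3, valOf0, valOf1, valOf2,
          valOf3, hx0, hx1, hπx0, hπx1] <;>
        rintro ⟨hc1, hc2, hc3, hc4⟩
      · omega
      · omega
      · omega
      · omega
      · -- (1,2) : 0 < z < t and π t < π z
        have := h3 z (by omega); omega
      · omega
      · -- (2,1) : t < z and 0 < π z < π t
        have := h4 z (by omega); omega


private lemma fst_decompose (π : Perm (Fin (m + 2))) (h0 : π 0 = 0) :
    (Equiv.Perm.decomposeFin π).1 = 0 := by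
  have hsym : Equiv.Perm.decomposeFin.symm (Equiv.Perm.decomposeFin π) = π :=
    Equiv.symm_apply_apply _ _
  have h := Equiv.Perm.decomposeFin_symm_apply_zero
    (Equiv.Perm.decomposeFin π).1 (Equiv.Perm.decomposeFin π).2
  rw [Prod.mk.eta, hsym] at h
  rw [← h, h0]

private lemma decompose_spec (π : Perm (Fin (m + 2))) (h0 : π 0 = 0) (a : Fin (m + 1)) :
    π a.succ = ((Equiv.Perm.decomposeFin π).2 a).succ := by
  have hsym : Equiv.Perm.decomposeFin.symm (Equiv.Perm.decomposeFin π) = π :=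
    Equiv.symm_apply_apply _ _
  have h := Equiv.Perm.decomposeFin_symm_apply_succ
    (Equiv.Perm.decomposeFin π).2 (Equiv.Perm.decomposeFin π).1 a
  rw [Prod.mk.eta, hsym, fst_decompose π h0] at h
  simpa using h

private lemma canon_iff (π : Perm (Fin (m + 2))) :
    Canon π ↔ (π 0 = 0 ∧ ∃ σ : Perm (Fin (m + 1)),
      (∀ a b : Fin (m + 1), σ a < σ b ↔ π a.succ < π b.succ) ∧
        HasStrongFixedPoint σ) := by
  constructor
  · rintro ⟨t, ht0, hπ0, h3, h4⟩
    have htlt := t.isLt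
    have hfixv : (π t : ℕ) = t := fixed_of_sandwich π t h3 h4
    set σ := (Equiv.Perm.decomposeFin π).2 with hσ
    have hval : ∀ a : Fin (m + 1), (σ a : ℕ) + 1 = (π a.succ : ℕ) := by
      intro a
      rw [decompose_spec π hπ0 a]
      simp [Fin.val_succ, hσ]
    refine ⟨hπ0, σ, ?_, ?_⟩
    · intro a b
      rw [decompose_spec π hπ0 a, decompose_spec π hπ0 b]
      exact (Fin.succ_lt_succ_iff).symm
    · set i0 : Fin (m + 1) := ⟨(t : ℕ) - 1, by omega⟩ with hi0
      have hi0v : (i0 : ℕ) = (t : ℕ) - 1 := by rw [hi0]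
      have ht' : i0.succ = t := Fin.ext (by rw [Fin.val_succ]; omega)
      refine ⟨i0, ?_, ?_, ?_⟩
      · apply Fin.ext
        have hv := hval i0
        have hv2 : (π i0.succ : ℕ) = (π t : ℕ) := by rw [ht']
        omega
      · intro j hj
        have hjv := Fin.lt_def.mp hj
        have hjs : ((j.succ : Fin (m + 2)) : ℕ) < (t : ℕ) := by
          rw [Fin.val_succ]; omega
        have h3' := h3 j.succ hjs
        have hv := hval j
        rw [Fin.lt_def]
        omega
      · intro j hj
        have hjv := Fin.lt_def.mp hj
        have hjs : (t : ℕ) < ((j.succ : Fin (m + 2)) : ℕ) := by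
          rw [Fin.val_succ]; omega
        have h4' := h4 j.succ hjs
        have hv := hval j
        rw [Fin.lt_def]
        omega
  · rintro ⟨hπ0, σ, hiso, i, hfix, hlt, hgt⟩
    have hπ0v : (π 0 : ℕ) = 0 := by rw [hπ0]; rfl
    have hilt := i.isLt
    refine ⟨i.succ, by simp [Fin.val_succ], hπ0, ?_, ?_⟩
    · intro z hz
      rcases Nat.eq_zero_or_pos (z : ℕ) with h | h
      · have hz0 : z = 0 := Fin.ext (by simpa using h)
        rw [hz0, hπ0v]
        have : (π i.succ : ℕ) ≠ 0 := by
          intro he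
          have : π i.succ = π 0 := Fin.ext (by rw [hπ0v]; exact he)
          have := π.injective this
          exact (Fin.succ_ne_zero i) this
        omega
      · have hzlt := z.isLt
        have hzv : (z : ℕ) < (i : ℕ) + 1 := by simpa [Fin.val_succ] using hz
        set j : Fin (m + 1) := ⟨(z : ℕ) - 1, by omega⟩ with hjdef
        have hjs : j.succ = z := Fin.ext (by simp [Fin.val_succ, hjdef]; omega)
        have hji : j < i := Fin.lt_def.mpr (by simp [hjdef]; omega)
        have := hlt j hji
        rw [← hfix] at this
        have := (hiso j i).mp this
        rw [hjs] at this
        exact Fin.lt_def.mp this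
    · intro z hz
      have hzlt := z.isLt
      have hzv : (i : ℕ) + 1 < (z : ℕ) := by
        have h' := hz
        rw [Fin.val_succ] at h'
        exact h'
      set j : Fin (m + 1) := ⟨(z : ℕ) - 1, by omega⟩ with hjdef
      have hjs : j.succ = z := Fin.ext (by simp [Fin.val_succ, hjdef]; omega)
      have hji : i < j := Fin.lt_def.mpr (by simp [hjdef]; omega)
      have := hgt j hji
      rw [← hfix] at this
      have := (hiso i j).mp this
      rw [hjs] at this
      exact Fin.lt_def.mp this

private lemma occ_iff_snd (π : Perm (Fin (m + 2))) :
    MeshOccursIn (1 : Perm (Fin 2)) R12 π ↔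
      (π 0 = 0 ∧ HasStrongFixedPoint (Equiv.Perm.decomposeFin π).2) := by
  rw [occ_iff_canon, canon_iff]
  constructor
  · rintro ⟨h0, σ, hiso, hs⟩
    refine ⟨h0, ?_⟩
    have hiso2 : ∀ a b, σ a < σ b ↔ (Equiv.Perm.decomposeFin π).2 a <
        (Equiv.Perm.decomposeFin π).2 b := by
      intro a b
      rw [hiso a b, decompose_spec π h0 a, decompose_spec π h0 b]
      exact Fin.succ_lt_succ_iff
    rw [← perm_eq_of_pattern σ _ hiso2]
    exact hs
  · rintro ⟨h0, hs⟩
    refine ⟨h0, (Equiv.Perm.decomposeFin π).2, ?_, hs⟩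
    intro a b
    rw [decompose_spec π h0 a, decompose_spec π h0 b]
    exact Fin.succ_lt_succ_iff.symm

private def occEquiv (m : ℕ) :
    {π : Perm (Fin (m + 2)) // MeshOccursIn (1 : Perm (Fin 2)) R12 π} ≃
      {σ : Perm (Fin (m + 1)) // HasStrongFixedPoint σ} where
  toFun p := ⟨(Equiv.Perm.decomposeFin p.1).2, ((occ_iff_snd p.1).mp p.2).2⟩
  invFun s := ⟨Equiv.Perm.decomposeFin.symm (0, s.1), by
    apply (occ_iff_snd _).mpr
    constructor
    · exact Equiv.Perm.decomposeFin_symm_apply_zero 0 s.1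
    · rw [Equiv.apply_symm_apply]
      exact s.2⟩
  left_inv p := by
    apply Subtype.ext
    have h0 := ((occ_iff_snd p.1).mp p.2).1
    have hfst := fst_decompose p.1 h0
    simp only
    rw [← hfst, Prod.mk.eta, Equiv.symm_apply_apply]
  right_inv s := by
    apply Subtype.ext
    simp only
    rw [Equiv.apply_symm_apply]

end Aux

/-- For `n ≥ 2`, a permutation `π` of length `n` contains
`(12, {(0,0),(0,1),(0,2),(1,0),(1,2),(2,0),(2,1)})` iff `π(1) = 1` and the
permutation of length `n-1` order-isomorphic to `π(2)⋯π(n)` has a strong fixed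
point; hence the number of avoiders is `n! − (n-1)! + g_{n-1}` with `g_m` the
number of permutations of length `m` without strong fixed points. -/
theorem stmt12 (n : ℕ) (hn : 2 ≤ n) :
    (∀ π : Equiv.Perm (Fin n),
      MeshOccursIn (1 : Equiv.Perm (Fin 2))
          {(0,0),(0,1),(0,2),(1,0),(1,2),(2,0),(2,1)} π ↔
        (π ⟨0, by omega⟩ = ⟨0, by omega⟩ ∧
          ∃ σ : Equiv.Perm (Fin (n - 1)),
            (∀ a b : Fin (n - 1),
              σ a < σ b ↔
                π ⟨(a : ℕ) + 1, by have := a.isLt; omega⟩ <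
                  π ⟨(b : ℕ) + 1, by have := b.isLt; omega⟩) ∧
            HasStrongFixedPoint σ)) ∧
    Nat.card {π : Equiv.Perm (Fin n) //
        MeshAvoids (1 : Equiv.Perm (Fin 2))
          {(0,0),(0,1),(0,2),(1,0),(1,2),(2,0),(2,1)} π} =
      n.factorial - (n - 1).factorial +
        Nat.card {σ : Equiv.Perm (Fin (n - 1)) // ¬ HasStrongFixedPoint σ} := by
  obtain ⟨m, rfl⟩ : ∃ m, n = m + 2 := ⟨n - 2, by omega⟩
  have e0 : (0 : Fin (m + 2)) = ⟨0, by omega⟩ := Fin.ext rfl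
  constructor
  · intro π
    constructor
    · intro h
      obtain ⟨h0, σ, hiso, hs⟩ := (canon_iff π).mp ((occ_iff_canon π).mp h)
      refine ⟨by rw [← e0]; exact h0, σ, ?_, hs⟩
      intro a b
      exact hiso a b
    · rintro ⟨h0, σ, hiso, hs⟩
      apply (occ_iff_canon π).mpr
      apply (canon_iff π).mpr
      refine ⟨by rw [e0]; exact h0, σ, ?_, hs⟩
      intro a b
      exact hiso a b
  · classical
    show Nat.card {π : Equiv.Perm (Fin (m + 2)) //
        ¬ MeshOccursIn (1 : Equiv.Perm (Fin 2)) R12 π} =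
      (m + 2).factorial - (m + 1).factorial +
        Nat.card {σ : Equiv.Perm (Fin (m + 1)) // ¬ HasStrongFixedPoint σ}
    have hsplit1 : Nat.card {π : Equiv.Perm (Fin (m + 2)) //
          MeshOccursIn (1 : Equiv.Perm (Fin 2)) R12 π} +
        Nat.card {π : Equiv.Perm (Fin (m + 2)) //
          ¬ MeshOccursIn (1 : Equiv.Perm (Fin 2)) R12 π} = (m + 2).factorial := by
      have h := Nat.card_congr
        (Equiv.sumCompl (fun π : Equiv.Perm (Fin (m + 2)) =>
          MeshOccursIn (1 : Equiv.Perm (Fin 2)) R12 π))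
      rw [Nat.card_sum] at h
      rw [h, Nat.card_eq_fintype_card, Fintype.card_perm, Fintype.card_fin]
    have hsplit2 : Nat.card {σ : Equiv.Perm (Fin (m + 1)) // HasStrongFixedPoint σ} +
        Nat.card {σ : Equiv.Perm (Fin (m + 1)) // ¬ HasStrongFixedPoint σ} =
          (m + 1).factorial := by
      have h := Nat.card_congr
        (Equiv.sumCompl (fun σ : Equiv.Perm (Fin (m + 1)) => HasStrongFixedPoint σ))
      rw [Nat.card_sum] at h
      rw [h, Nat.card_eq_fintype_card, Fintype.card_perm, Fintype.card_fin]
    have hocc : Nat.card {π : Equiv.Perm (Fin (m + 2)) //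
          MeshOccursIn (1 : Equiv.Perm (Fin 2)) R12 π} =
        Nat.card {σ : Equiv.Perm (Fin (m + 1)) // HasStrongFixedPoint σ} :=
      Nat.card_congr (occEquiv m)
    have hle : (m + 1).factorial ≤ (m + 2).factorial :=
      Nat.factorial_le (by omega)
    omega
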